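/- arXiv:1607.05815 — 2 statements merged into one kernel-verified Lean document; each statement's English description precedes it below -/
import Mathlib

section
/- Let H1 and H2 be complex Hilbert spaces and let A ∈ B(H1), B ∈ B(H2, H1), C ∈ B(H1, H2), D ∈ B(H2) be such that the block operator [[A, B], [C, D]] : H1 ⊕ H2 → H1 ⊕ H2 is unitary. Then for every z ∈ ℂ with |z| < 1 the operator I − z D is invertible, and the transfer function τ(z) = A + z B (I − z D)^{-1} C satisfies I − τ(z)* τ(z) = (1 − |z|²) C* (I − z̄ D*)^{-1} (I − z D)^{-1} C. -/
open ContinuousLinearMap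

set_option maxHeartbeats 1000000

noncomputable section

/-- If the block operator `[[A, B], [C, D]] : H₁ ⊕ H₂ → H₁ ⊕ H₂` is unitary (expressed by the
six algebraic relations below), then for `|z| < 1` the operator `I - z D` is invertible and the
transfer function `τ(z) = A + z B (I − z D)⁻¹ C` satisfies
`I − τ(z)* τ(z) = (1 − |z|²) C* (I − z̄ D*)⁻¹ (I − z D)⁻¹ C`. -/
theorem transfer_function_identity
    {H₁ H₂ : Type*} [NormedAddCommGroup H₁] [InnerProductSpace ℂ H₁] [CompleteSpace H₁]
    [NormedAddCommGroup H₂] [InnerProductSpace ℂ H₂] [CompleteSpace H₂]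
    (A : H₁ →L[ℂ] H₁) (B : H₂ →L[ℂ] H₁) (C : H₁ →L[ℂ] H₂) (D : H₂ →L[ℂ] H₂)
    (hc₁ : adjoint A ∘L A + adjoint C ∘L C = 1)
    (hc₂ : adjoint B ∘L B + adjoint D ∘L D = 1)
    (hc₃ : adjoint A ∘L B + adjoint C ∘L D = 0)
    (hr₁ : A ∘L adjoint A + B ∘L adjoint B = 1)
    (hr₂ : C ∘L adjoint C + D ∘L adjoint D = 1)
    (hr₃ : A ∘L adjoint C + B ∘L adjoint D = 0)
    (z : ℂ) (hz : ‖z‖ < 1) :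
    IsUnit (1 - z • D) ∧
    IsUnit (1 - (starRingEnd ℂ z) • adjoint D) ∧
    1 - adjoint (A + z • (B ∘L (Ring.inverse (1 - z • D) ∘L C))) ∘L
          (A + z • (B ∘L (Ring.inverse (1 - z • D) ∘L C))) =
      ((1 - ‖z‖ ^ 2 : ℝ) : ℂ) •
        (adjoint C ∘L (Ring.inverse (1 - (starRingEnd ℂ z) • adjoint D) ∘L
          (Ring.inverse (1 - z • D) ∘L C))) := by
  have hD : ‖D‖ ≤ 1 := by
    refine opNorm_le_bound D zero_le_one fun y => ?_
    have h := congrArg (fun T : H₂ →L[ℂ] H₂ => RCLike.re (inner ℂ (T y) y : ℂ)) hc₂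
    simp only [ContinuousLinearMap.add_apply, ContinuousLinearMap.comp_apply,
      inner_add_left, adjoint_inner_left, ContinuousLinearMap.one_apply, map_add,
      inner_self_eq_norm_sq] at h
    rw [one_mul]
    nlinarith [norm_nonneg (D y), norm_nonneg y, sq_nonneg ‖B y‖]
  have hzD : ‖z • D‖ < 1 := by
    rw [norm_smul]
    nlinarith [norm_nonneg z, norm_nonneg D]
  have hE : IsUnit (1 - z • D) := isUnit_one_sub_of_norm_lt_one hzD
  have hF : IsUnit (1 - (starRingEnd ℂ z) • adjoint D) := by
    have : (1 - (starRingEnd ℂ z) • adjoint D) = star (1 - z • D) := by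
      simp [star_smul, star_eq_adjoint]
    rw [this]
    exact hE.star
  refine ⟨hE, hF, ?_⟩
  set D' := adjoint D with hD'
  set E : H₂ →L[ℂ] H₂ := 1 - z • D with hEdef
  set F : H₂ →L[ℂ] H₂ := 1 - (starRingEnd ℂ z) • D' with hFdef
  set R := Ring.inverse E with hRdef
  set S := Ring.inverse F with hSdef
  have hFE : F = star E := by
    simp [hEdef, hFdef, star_smul, star_eq_adjoint, hD']
  have hSR : S = adjoint R := by
    rw [hSdef, hFE, Ring.inverse_star, hRdef, star_eq_adjoint]
  have hRE : R * E = 1 := Ring.inverse_mul_cancel E hE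
  have hER : E * R = 1 := Ring.mul_inverse_cancel E hE
  have hSF : S * F = 1 := Ring.inverse_mul_cancel F hF
  have hFS : F * S = 1 := Ring.mul_inverse_cancel F hF
  set w := starRingEnd ℂ z with hw
  -- key identity
  have key : S * R = 1 + z • (D * R) + w • (S * D') + (z * w) • (S * (D' * (D * R))) := by
    refine hF.mul_left_cancel (hE.mul_right_cancel ?_)
    have expand : F * (1 + z • (D * R) + w • (S * D') + (z * w) • (S * (D' * (D * R)))) * E
        = F * E + z • (F * D) * (R * E) + w • (F * S) * (D' * E)
          + (z * w) • ((F * S) * (D' * (D * (R * E)))) := by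
      simp only [mul_add, add_mul, mul_one, one_mul, mul_smul_comm, smul_mul_assoc, mul_assoc]
    rw [expand, hRE, hFS]
    have lhs : F * (S * R) * E = 1 := by
      rw [← mul_assoc, hFS, one_mul, hRE]
    rw [lhs]
    simp only [hEdef, hFdef, mul_one, one_mul, mul_sub, sub_mul, smul_sub, sub_smul,
      smul_mul_assoc, mul_smul_comm, smul_smul, mul_assoc]
    module
  -- relations
  have hA'A : adjoint A ∘L A = 1 - adjoint C ∘L C := by
    rw [← hc₁]; abel
  have hB'B : adjoint B ∘L B = 1 - D' ∘L D := by
    rw [hD', ← hc₂]; abel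
  have hAB : adjoint A ∘L B = -(adjoint C ∘L D) := by
    rw [eq_neg_iff_add_eq_zero]; exact hc₃
  have hBA : adjoint B ∘L A = -(D' ∘L C) := by
    have h := congrArg (fun T : H₂ →L[ℂ] H₁ => adjoint T) hc₃
    simp only [map_add, adjoint_comp, adjoint_adjoint, map_zero] at h
    rw [eq_neg_iff_add_eq_zero, hD']
    exact h
  -- expand the transfer function product
  have hadj : adjoint (A + z • (B ∘L (R ∘L C)))
      = adjoint A + w • (adjoint C ∘L (S ∘L adjoint B)) := by
    rw [map_add, map_smulₛₗ]
    simp only [adjoint_comp, hSR, hw]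
    rw [comp_assoc]
  have hscal : ((1 - ‖z‖ ^ 2 : ℝ) : ℂ) = 1 - z * w := by
    rw [hw]
    rw [Complex.mul_conj]
    push_cast [Complex.normSq_eq_norm_sq]
    ring
  rw [hadj, hscal]
  simp only [add_comp, comp_add, smul_comp, comp_smul, smul_smul]
  have h1 : ((adjoint C).comp (S.comp (adjoint B))).comp A
      = -((adjoint C).comp ((S * D').comp C)) := by
    rw [comp_assoc, comp_assoc, hBA]
    simp only [comp_neg, neg_comp, mul_def, comp_assoc]
  have h2 : (adjoint A).comp (B.comp (R.comp C))
      = -((adjoint C).comp ((D * R).comp C)) := by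
    rw [← comp_assoc, hAB]
    simp only [neg_comp, mul_def, comp_assoc]
  have h3 : ((adjoint C).comp (S.comp (adjoint B))).comp (B.comp (R.comp C))
      = (adjoint C).comp ((S * ((1 - D' * D) * R)).comp C) := by
    rw [comp_assoc, comp_assoc, ← comp_assoc (adjoint B) B (R.comp C), hB'B]
    simp only [mul_def, comp_assoc]
  have hmid : (1 - z * w) • (S * R)
      = 1 + z • (D * R) + w • (S * D') - (z * w) • (S * ((1 - D' * D) * R)) := by
    have hexp : S * ((1 - D' * D) * R) = S * R - S * (D' * (D * R)) := by
      simp only [sub_mul, one_mul, mul_sub, mul_assoc]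
    rw [hexp, key]
    module
  have hR3 : S.comp (R.comp C) = (S * R).comp C := by
    rw [mul_def, comp_assoc]
  rw [hA'A, h1, h2, h3, hR3]
  rw [show (1 - z * w) • ((adjoint C).comp ((S * R).comp C))
      = (adjoint C).comp ((((1 : ℂ) - z * w) • (S * R)).comp C) from by
    rw [smul_comp, comp_smul]]
  rw [hmid]
  simp only [comp_add, comp_sub, add_comp, sub_comp, comp_smul, smul_comp, comp_neg, neg_comp,
    one_def, id_comp]
  module
end
end

section
/- Let T be a pure contraction on a complex Hilbert space H, let G be the closure of the range of D_T, and let Π : H → ℓ²(ℕ, G) be the isometry (Π h)(n) = D_T T*ⁿ h. Then the linear span of {Sᵐ (Π h) : m ∈ ℕ, h ∈ H} is dense in ℓ²(ℕ, G), where S is the unilateral shift on ℓ²(ℕ, G). (Minimality of the Sz.-Nagy–Foias isometric dilation.) -/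
open ContinuousLinearMap
open scoped ENNReal

set_option linter.unusedSectionVars false

noncomputable section

section ShiftOperator

variable {E : Type*} [NormedAddCommGroup E] [InnerProductSpace ℂ E]

/-- The right-shifted sequence: `(shiftFun f) 0 = 0`, `(shiftFun f) (n+1) = f n`. -/
def shiftFun (f : ℕ → E) : ℕ → E
  | 0 => 0
  | (n + 1) => f n

lemma summable_of_lp (f : lp (fun _ : ℕ => E) 2) :
    Summable fun n => ‖(f : ∀ _ : ℕ, E) n‖ ^ (2 : ℝ) := by
  have h := lp.memℓp f
  have h2 : (0 : ℝ) < (2 : ℝ≥0∞).toReal := by norm_num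
  simpa using (memℓp_gen_iff h2).mp h

lemma summable_shiftFun (f : lp (fun _ : ℕ => E) 2) :
    Summable fun n => ‖shiftFun (f : ∀ _ : ℕ, E) n‖ ^ (2 : ℝ) := by
  have h1 : Summable fun n => ‖shiftFun (f : ∀ _ : ℕ, E) (n + 1)‖ ^ (2 : ℝ) := by
    simpa [shiftFun] using summable_of_lp f
  exact (summable_nat_add_iff
    (f := fun n => ‖shiftFun ((f : ∀ _ : ℕ, E)) n‖ ^ (2 : ℝ)) 1).mp h1

lemma memℓp_shiftFun (f : lp (fun _ : ℕ => E) 2) : Memℓp (shiftFun (f : ∀ _ : ℕ, E)) 2 := by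
  apply memℓp_gen
  simpa using summable_shiftFun f

lemma norm_shift_eq (f : lp (fun _ : ℕ => E) 2)
    (g : lp (fun _ : ℕ => E) 2) (hg : (g : ∀ _ : ℕ, E) = shiftFun (f : ∀ _ : ℕ, E)) :
    ‖g‖ = ‖f‖ := by
  have h2 : (0 : ℝ) < (2 : ℝ≥0∞).toReal := by norm_num
  rw [lp.norm_eq_tsum_rpow h2 f, lp.norm_eq_tsum_rpow h2 g]
  congr 1
  have htsum : (∑' n, ‖shiftFun (f : ∀ _ : ℕ, E) n‖ ^ (2 : ℝ)) =
      ∑' n, ‖(f : ∀ _ : ℕ, E) n‖ ^ (2 : ℝ) := by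
    rw [(summable_shiftFun f).tsum_eq_zero_add]
    simp [shiftFun]
  simp only [hg]
  simpa using htsum

/-- The unilateral shift `S` on `ℓ²(ℕ, E)`: `(S f)(0) = 0` and `(S f)(n) = f (n-1)` for
`n ≥ 1`. -/
def shiftOp (E : Type*) [NormedAddCommGroup E] [InnerProductSpace ℂ E] :
    lp (fun _ : ℕ => E) 2 →L[ℂ] lp (fun _ : ℕ => E) 2 :=
  LinearMap.mkContinuous
    { toFun := fun f => ⟨shiftFun (f : ∀ _ : ℕ, E), memℓp_shiftFun f⟩
      map_add' := by
        intro f g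
        apply lp.ext
        funext n
        cases n <;> simp [shiftFun, lp.coeFn_add, Pi.add_apply] <;> first | rfl | exact (add_zero (0 : E)).symm
      map_smul' := by
        intro c f
        apply lp.ext
        funext n
        cases n <;> simp [shiftFun, lp.coeFn_smul, Pi.smul_apply] }
    1
    (by
      intro f
      rw [one_mul]
      exact le_of_eq (norm_shift_eq f _ rfl))

@[simp] lemma shiftOp_apply_zero (f : lp (fun _ : ℕ => E) 2) :
    (shiftOp E f : ∀ _ : ℕ, E) 0 = 0 := rfl

@[simp] lemma shiftOp_apply_succ (f : lp (fun _ : ℕ => E) 2) (n : ℕ) :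
    (shiftOp E f : ∀ _ : ℕ, E) (n + 1) = (f : ∀ _ : ℕ, E) n := rfl

end ShiftOperator

section Defect

variable {H : Type*} [NormedAddCommGroup H] [InnerProductSpace ℂ H] [CompleteSpace H]

/-- The defect operator `D_T = (I - T T*)^{1/2}` of a contraction `T`. -/
def defect (T : H →L[ℂ] H) : H →L[ℂ] H :=
  CFC.sqrt (1 - T * adjoint T)

end Defect

section DefectClosure

variable {H : Type*} [NormedAddCommGroup H] [InnerProductSpace ℂ H] [CompleteSpace H]

/-- The closure of the range of the defect operator of `T`. -/
def defectClos (T : H →L[ℂ] H) : Submodule ℂ H :=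
  (LinearMap.range (defect T : H →ₗ[ℂ] H)).topologicalClosure

/-- `D_T x`, viewed as an element of the closure of the range of `D_T`. -/
def defectElem (T : H →L[ℂ] H) (x : H) : defectClos T :=
  ⟨defect T x, Submodule.le_topologicalClosure _ (LinearMap.mem_range_self _ x)⟩

instance (T : H →L[ℂ] H) : CompleteSpace (defectClos T) :=
  (Submodule.isClosed_topologicalClosure _).isComplete.completeSpace_coe

end DefectClosure


section Aux

variable {E : Type*} [NormedAddCommGroup E] [InnerProductSpace ℂ E]

lemma shiftOp_pow_apply (f : lp (fun _ : ℕ => E) 2) (m n : ℕ) :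
    (((shiftOp E) ^ m) f : ∀ _ : ℕ, E) n =
      if m ≤ n then (f : ∀ _ : ℕ, E) (n - m) else 0 := by
  induction m generalizing n with
  | zero => simp
  | succ m ih =>
    have : ((shiftOp E) ^ (m + 1)) f = shiftOp E (((shiftOp E) ^ m) f) := by
      rw [pow_succ']; rfl
    rw [this]
    cases n with
    | zero => simp
    | succ n =>
      rw [shiftOp_apply_succ, ih]
      by_cases h : m ≤ n
      · rw [if_pos h, if_pos (by omega), Nat.succ_sub_succ]
      · rw [if_neg h, if_neg (by omega)]

/-- `lp.single` as a continuous linear map. -/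
def lpSingleCLM (n : ℕ) : E →L[ℂ] lp (fun _ : ℕ => E) 2 :=
  LinearMap.mkContinuous
    { toFun := fun a => lp.single 2 n a
      map_add' := by
        intro a b
        apply lp.ext
        funext k
        by_cases h : k = n
        · subst h
          simp [lp.single_apply_self]
        · simp [lp.single_apply_ne _ _ _ h]
      map_smul' := by
        intro c a
        simp [lp.single_smul] }
    1
    (by
      intro a
      rw [one_mul]
      have := lp.norm_single (E := fun _ : ℕ => E) (by norm_num : (0:ℝ≥0∞) < 2)
        n a
      exact le_of_eq this)

@[simp] lemma lpSingleCLM_apply (n : ℕ) (a : E) : lpSingleCLM n a = lp.single 2 n a := rfl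

end Aux

section KeyIdentity

variable {H : Type*} [NormedAddCommGroup H] [InnerProductSpace ℂ H] [CompleteSpace H]

lemma single_eq_shift_diff (T : H →L[ℂ] H)
    (Γ : H → lp (fun _ : ℕ => ↥(defectClos T)) 2)
    (hΓ : ∀ (h : H) (n : ℕ),
      (((Γ h : ∀ _ : ℕ, ↥(defectClos T)) n : ↥(defectClos T)) : H) =
        defect T (((adjoint T) ^ n) h))
    (x : H) (n : ℕ) :
    lp.single 2 n (defectElem T x) =
      ((shiftOp ↥(defectClos T)) ^ n) (Γ x) -
        ((shiftOp ↥(defectClos T)) ^ (n + 1)) (Γ ((adjoint T) x)) := by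
  apply lp.ext
  funext k
  rw [lp.coeFn_sub, Pi.sub_apply, shiftOp_pow_apply, shiftOp_pow_apply]
  rcases lt_trichotomy k n with hk | hk | hk
  · rw [if_neg (by omega), if_neg (by omega), sub_zero,
      lp.single_apply_ne _ _ _ (Nat.ne_of_lt hk)]
  · subst hk
    rw [if_pos le_rfl, if_neg (by omega), sub_zero, lp.single_apply_self]
    apply Subtype.ext
    rw [hΓ]
    simp [defectElem]
  · rw [if_pos (by omega), if_pos (by omega),
      lp.single_apply_ne _ _ _ (Nat.ne_of_gt hk)]
    apply Subtype.ext
    push_cast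
    rw [hΓ, hΓ]
    have hkn : k - n = (k - (n + 1)) + 1 := by omega
    rw [hkn, pow_succ]
    simp

end KeyIdentity

/-- Minimality of the Sz.-Nagy–Foias isometric dilation: for a pure contraction `T` with
`G` the closure of the range of `D_T` and `Γ : H → ℓ²(ℕ, G)` the canonical isometry
`(Γ h)(n) = D_T T*ⁿ h`, the linear span of `{Sᵐ (Γ h) : m ∈ ℕ, h ∈ H}` is dense in
`ℓ²(ℕ, G)`. -/
theorem minimality_of_dilation
    {H : Type*} [NormedAddCommGroup H] [InnerProductSpace ℂ H] [CompleteSpace H]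
    (T : H →L[ℂ] H) (hT : ‖T‖ ≤ 1)
    (hpure : ∀ h : H,
      Filter.Tendsto (fun n : ℕ => ((adjoint T) ^ n) h) Filter.atTop (nhds 0))
    (Γ : H → lp (fun _ : ℕ => ↥(defectClos T)) 2)
    (hΓ : ∀ (h : H) (n : ℕ),
      (((Γ h : ∀ _ : ℕ, ↥(defectClos T)) n : ↥(defectClos T)) : H) =
        defect T (((adjoint T) ^ n) h)) :
    Dense ((Submodule.span ℂ {f : lp (fun _ : ℕ => ↥(defectClos T)) 2 |
        ∃ (m : ℕ) (h : H), f = ((shiftOp ↥(defectClos T)) ^ m) (Γ h)} :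
      Submodule ℂ (lp (fun _ : ℕ => ↥(defectClos T)) 2)) :
      Set (lp (fun _ : ℕ => ↥(defectClos T)) 2)) := by
  classical
  set P : Set (lp (fun _ : ℕ => ↥(defectClos T)) 2) :=
    {f | ∃ (m : ℕ) (h : H), f = ((shiftOp ↥(defectClos T)) ^ m) (Γ h)} with hP
  set C := (Submodule.span ℂ P).topologicalClosure with hC
  have hCclosed : IsClosed (C : Set (lp (fun _ : ℕ => ↥(defectClos T)) 2)) :=
    Submodule.isClosed_topologicalClosure _
  have hsingle_defect : ∀ (n : ℕ) (x : H),
      lp.single 2 n (defectElem T x) ∈ Submodule.span ℂ P := by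
    intro n x
    rw [single_eq_shift_diff T Γ hΓ x n]
    exact sub_mem
      (Submodule.subset_span ⟨n, x, rfl⟩)
      (Submodule.subset_span ⟨n + 1, (adjoint T) x, rfl⟩)
  have hsingle : ∀ (n : ℕ) (g : ↥(defectClos T)), lp.single 2 n g ∈ C := by
    intro n g
    have hg : (g : H) ∈ closure (LinearMap.range (defect T : H →ₗ[ℂ] H) : Set H) := g.2
    rcases mem_closure_iff_seq_limit.mp hg with ⟨u, hu, hlim⟩
    choose x hx using hu
    have hconv : Filter.Tendsto (fun k => defectElem T (x k)) Filter.atTop (nhds g) := by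
      rw [tendsto_subtype_rng]
      simpa [defectElem, show ∀ k, defect T (x k) = u k from hx] using hlim
    have hconv2 : Filter.Tendsto (fun k => lpSingleCLM n (defectElem T (x k)))
        Filter.atTop (nhds (lpSingleCLM n g)) :=
      ((lpSingleCLM (E := ↥(defectClos T)) n).continuous.tendsto g).comp hconv
    have hconv3 : Filter.Tendsto (fun k => lp.single (E := fun _ : ℕ => ↥(defectClos T)) 2 n (defectElem T (x k)))
        Filter.atTop (nhds (lp.single (E := fun _ : ℕ => ↥(defectClos T)) 2 n g)) := hconv2
    refine hCclosed.mem_of_tendsto hconv3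
      (Filter.Eventually.of_forall fun k => ?_)
    exact Submodule.le_topologicalClosure _ (hsingle_defect n (x k))
  have hall : ∀ f : lp (fun _ : ℕ => ↥(defectClos T)) 2, f ∈ C := by
    intro f
    have hsum := lp.hasSum_single (by norm_num : (2 : ℝ≥0∞) ≠ ⊤) f
    refine hCclosed.mem_of_tendsto hsum (Filter.Eventually.of_forall fun s => ?_)
    exact Submodule.sum_mem _ fun i _ => hsingle i ((f : ∀ _ : ℕ, ↥(defectClos T)) i)
  intro f
  exact hall f
end
end
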